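/- arXiv:2403.04565 — 2 statements merged into one kernel-verified Lean document; each statement's English description precedes it below -/
import Mathlib

section
/- Let A be a commutative ring and let M be an A[X]-module which is finitely generated and projective as an A-module. Then there exists a short exact sequence of A[X]-modules 0 → P₁ → P₀ → M → 0 in which P₀ and P₁ are finitely generated projective A[X]-modules (one may take P₀ = P₁ = A[X] ⊗_A M). -/
open TensorProduct Polynomial

section Aux
variable {A : Type*} [CommRing A] {M : Type*} [AddCommGroup M] [Module A M]
  [Module (Polynomial A) M] [IsScalarTower A (Polynomial A) M]

/-- The `A`-linear action of `X` on `M`. -/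
noncomputable def xAction : M →ₗ[A] M where
  toFun m := (X : A[X]) • m
  map_add' := smul_add _
  map_smul' a m := smul_comm _ a m

noncomputable def fAux : A[X] ⊗[A] M →ₗ[A[X]] A[X] ⊗[A] M :=
  (X : A[X]) • LinearMap.id - LinearMap.baseChange A[X] (xAction (A := A) (M := M))

noncomputable def gAux : A[X] ⊗[A] M →ₗ[A[X]] M :=
  LinearMap.liftBaseChange A[X] LinearMap.id

lemma fAux_tmul (p : A[X]) (m : M) :
    fAux (p ⊗ₜ[A] m) = (X * p) ⊗ₜ[A] m - p ⊗ₜ[A] ((X : A[X]) • m) := by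
  simp [fAux, xAction, smul_tmul']

lemma gAux_tmul (p : A[X]) (m : M) : gAux (p ⊗ₜ[A] m) = p • m := rfl

noncomputable def eAux : A[X] ⊗[A] M ≃ₗ[A] (ℕ →₀ M) :=
  (TensorProduct.congr ((Polynomial.toFinsuppIsoAlg A).toLinearEquiv.trans (AddMonoidAlgebra.coeffLinearEquiv A))
    (LinearEquiv.refl A M)).trans (TensorProduct.finsuppScalarLeft A M ℕ)

noncomputable def cAux (n : ℕ) : A[X] ⊗[A] M →ₗ[A] M :=
  (Finsupp.lapply n) ∘ₗ (eAux (A := A) (M := M)).toLinearMap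

lemma cAux_tmul (n : ℕ) (p : A[X]) (m : M) :
    cAux n (p ⊗ₜ[A] m) = p.coeff n • m := by
  simp only [cAux, eAux, LinearMap.coe_comp, LinearEquiv.coe_coe, Function.comp_apply,
    LinearEquiv.trans_apply, TensorProduct.congr_tmul, LinearEquiv.refl_apply,
    Finsupp.lapply_apply]
  exact TensorProduct.finsuppScalarLeft_apply_tmul_apply _ _ _

lemma cAux_eq (t : A[X] ⊗[A] M) (n : ℕ) : cAux n t = eAux t n := rfl

end Aux

section Aux2
set_option linter.unusedSectionVars false
variable {A : Type*} [CommRing A] {M : Type*} [AddCommGroup M] [Module A M]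
  [Module (Polynomial A) M] [IsScalarTower A (Polynomial A) M]

lemma cAux_fAux (n : ℕ) (t : A[X] ⊗[A] M) :
    cAux (n + 1) (fAux t) = cAux n t - (X : A[X]) • cAux (n + 1) t := by
  induction t with
  | zero => simp
  | tmul p m =>
      rw [fAux_tmul]
      simp only [map_sub, cAux_tmul, coeff_X_mul]
      rw [smul_comm]
  | add x y hx hy =>
      simp only [map_add, hx, hy]
      abel_nf
      rw [smul_add]
      abel

lemma fAux_injective : Function.Injective (fAux (A := A) (M := M)) := by
  rw [injective_iff_map_eq_zero]
  intro t ht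
  have key : ∀ n, cAux n t = (X : A[X]) • cAux (n + 1) t := by
    intro n
    have := cAux_fAux n t
    rw [ht] at this
    simp only [map_zero] at this
    linear_combination (norm := module) -this
  have step : ∀ k n, cAux n t = ((X : A[X]) ^ k) • cAux (n + k) t := by
    intro k
    induction k with
    | zero => simp
    | succ k ih =>
        intro n
        rw [key n, ih (n + 1), ← mul_smul]
        ring_nf
  have : eAux t = 0 := by
    ext n
    have hs : cAux (n + ((eAux t).support.sup id + 1)) t = 0 := by
      rw [cAux_eq]
      apply Finsupp.notMem_support_iff.mp
      intro hmem
      have := Finset.le_sup (f := id) hmem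
      simp only [id] at this
      omega
    have := step ((eAux t).support.sup id + 1) n
    rw [hs, smul_zero] at this
    simpa [cAux_eq] using this
  exact (LinearEquiv.map_eq_zero_iff eAux).mp this

lemma gAux_fAux (t : A[X] ⊗[A] M) : gAux (fAux t) = 0 := by
  induction t with
  | zero => simp
  | tmul p m =>
      rw [fAux_tmul]
      simp only [map_sub, gAux_tmul]
      rw [mul_smul, smul_comm]
      simp
  | add x y hx hy => simp [map_add, hx, hy]

lemma key_mem (p : A[X]) : ∀ m : M,
    p ⊗ₜ[A] m - 1 ⊗ₜ[A] (p • m) ∈ LinearMap.range (fAux (A := A) (M := M)) := by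
  induction p using Polynomial.induction_on with
  | C a =>
      intro m
      have h1 : (C a : A[X]) ⊗ₜ[A] m = a • ((1 : A[X]) ⊗ₜ[A] m) := by
        rw [smul_tmul', ← Algebra.algebraMap_eq_smul_one, Polynomial.algebraMap_eq]
      have h2 : (C a : A[X]) • m = a • m := by
        rw [← Polynomial.algebraMap_eq]
        exact algebraMap_smul A[X] a m
      rw [h1, h2, ← tmul_smul, sub_self]
      exact Submodule.zero_mem _
  | add p q hp hq =>
      intro m
      have := Submodule.add_mem _ (hp m) (hq m)
      convert this using 1
      rw [add_tmul, add_smul, tmul_add]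
      abel
  | monomial n a ih =>
      intro m
      have heq : (C a * X ^ (n + 1) : A[X]) = X * (C a * X ^ n) := by ring
      set q : A[X] := C a * X ^ n with hq
      have hsm : (X * q) • m = q • ((X : A[X]) • m) := by
        rw [mul_comm, mul_smul]
      rw [heq, hsm]
      have : (X * q) ⊗ₜ[A] m - 1 ⊗ₜ[A] (q • ((X : A[X]) • m)) =
          fAux (q ⊗ₜ[A] m) + (q ⊗ₜ[A] ((X : A[X]) • m) - 1 ⊗ₜ[A] (q • ((X : A[X]) • m))) := by
        rw [fAux_tmul]; abel
      rw [this]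
      exact Submodule.add_mem _ (LinearMap.mem_range_self _ _) (ih ((X : A[X]) • m))

lemma range_eq_ker : LinearMap.range (fAux (A := A) (M := M)) = LinearMap.ker gAux := by
  apply le_antisymm
  · rintro x ⟨s, rfl⟩
    exact gAux_fAux s
  · intro t ht
    rw [LinearMap.mem_ker] at ht
    have : ∀ u : A[X] ⊗[A] M, u - 1 ⊗ₜ[A] (gAux u) ∈ LinearMap.range (fAux (A := A) (M := M)) := by
      intro u
      induction u with
      | zero => simp
      | tmul p m => rw [gAux_tmul]; exact key_mem p m
      | add x y hx hy =>
          have := Submodule.add_mem _ hx hy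
          convert this using 1
          rw [map_add, tmul_add]
          abel
    have h2 := this t
    rwa [ht, tmul_zero, sub_zero] at h2

end Aux2

/-- Let `A` be a commutative ring and `M` an `A[X]`-module which is finitely generated
and projective as an `A`-module.  Then there is a short exact sequence of `A[X]`-modules
`0 → P₁ → P₀ → M → 0` in which `P₀` and `P₁` are finitely generated projective
`A[X]`-modules; indeed one may take `P₀ = P₁ = A[X] ⊗_A M`. -/
theorem exists_length_one_projective_resolution_over_polynomial_ring
    (A : Type*) [CommRing A]
    (M : Type*) [AddCommGroup M] [Module A M]
    [Module (Polynomial A) M] [IsScalarTower A (Polynomial A) M]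
    [Module.Finite A M] [Module.Projective A M] :
    ∃ (f : Polynomial A ⊗[A] M →ₗ[Polynomial A] Polynomial A ⊗[A] M)
      (g : Polynomial A ⊗[A] M →ₗ[Polynomial A] M),
      Module.Finite (Polynomial A) (Polynomial A ⊗[A] M) ∧
      Module.Projective (Polynomial A) (Polynomial A ⊗[A] M) ∧
      Function.Injective f ∧
      Function.Surjective g ∧
      LinearMap.range f = LinearMap.ker g := by
  refine ⟨fAux, gAux, inferInstance, inferInstance, fAux_injective, ?_, range_eq_ker⟩
  intro m
  exact ⟨1 ⊗ₜ[A] m, by simp [gAux_tmul]⟩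
end

section
/- Let R be a commutative ring and I ⊆ R an ideal with I² = 0, and set R₀ = R/I. If B and B′ are étale R-algebras such that R₀ ⊗_R B and R₀ ⊗_R B′ are isomorphic as R₀-algebras, then B and B′ are isomorphic as R-algebras. -/
open TensorProduct

section Aux

variable {R : Type u} [CommRing R] (I : Ideal R)
variable (A : Type u) [CommRing A] [Algebra R A]

lemma includeRight_surjective_aux :
    Function.Surjective
      (Algebra.TensorProduct.includeRight : A →ₐ[R] (R ⧸ I) ⊗[R] A) := by
  intro x
  induction x with
  | zero => exact ⟨0, map_zero _⟩
  | tmul r a =>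
    obtain ⟨r, rfl⟩ := Ideal.Quotient.mk_surjective r
    exact ⟨r • a, by
      show (1 : R ⧸ I) ⊗ₜ[R] (r • a) = _
      rw [tmul_smul, smul_tmul']
      congr 1
      simp [Algebra.smul_def]⟩
  | add x y hx hy =>
    obtain ⟨a, ha⟩ := hx
    obtain ⟨b, hb⟩ := hy
    exact ⟨a + b, by rw [map_add, ha, hb]⟩

lemma includeRight_ker_sq_aux (hI : I ^ 2 = ⊥) :
    IsNilpotent (RingHom.ker
      ((Algebra.TensorProduct.includeRight : A →ₐ[R] (R ⧸ I) ⊗[R] A) : A →+* (R ⧸ I) ⊗[R] A)) := by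
  refine ⟨2, le_bot_iff.mp ?_⟩
  have hle : RingHom.ker
      ((Algebra.TensorProduct.includeRight : A →ₐ[R] (R ⧸ I) ⊗[R] A) : A →+* (R ⧸ I) ⊗[R] A)
      ≤ I.map (algebraMap R A) := by
    intro x hx
    have hx' : (1 : R ⧸ I) ⊗ₜ[R] x = 0 := hx
    have : x ∈ I • (⊤ : Submodule R A) := by
      have h2 := congrArg (TensorProduct.quotTensorEquivQuotSMul A I) hx'
      rw [map_zero] at h2
      have h3 : (1 : R ⧸ I) = Ideal.Quotient.mk I (1 : R) := rfl
      rw [h3, TensorProduct.quotTensorEquivQuotSMul_mk_tmul, one_smul] at h2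
      exact (Submodule.Quotient.mk_eq_zero _).mp h2
    rw [Ideal.smul_top_eq_map] at this
    exact this
  calc (RingHom.ker _) ^ 2 ≤ (I.map (algebraMap R A)) ^ 2 :=
        Ideal.pow_right_mono hle 2
    _ = (I ^ 2).map (algebraMap R A) := (Ideal.map_pow _ _ _).symm
    _ ≤ ⊥ := by rw [hI, Ideal.map_bot]

end Aux

/-- Let `R` be a commutative ring and `I ⊆ R` an ideal with `I² = 0`, and set
`R₀ = R/I`.  If `B` and `B′` are étale `R`-algebras such that `R₀ ⊗_R B` and
`R₀ ⊗_R B′` are isomorphic as `R₀`-algebras, then `B` and `B′` are isomorphic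
as `R`-algebras. -/
theorem etale_lift_unique_of_square_zero
    (R : Type u) [CommRing R] (I : Ideal R) (hI : I ^ 2 = ⊥)
    (B : Type u) [CommRing B] [Algebra R B] [Algebra.Etale R B]
    (B' : Type u) [CommRing B'] [Algebra R B'] [Algebra.Etale R B']
    (e : Nonempty ((R ⧸ I) ⊗[R] B ≃ₐ[R ⧸ I] (R ⧸ I) ⊗[R] B')) :
    Nonempty (B ≃ₐ[R] B') := by
  obtain ⟨e⟩ := e
  have : Algebra.FormallyEtale R B := Algebra.Etale.formallyEtale
  have : Algebra.FormallyEtale R B' := Algebra.Etale.formallyEtale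
  have : Algebra.FormallySmooth R B := inferInstance
  have : Algebra.FormallySmooth R B' := inferInstance
  have : Algebra.FormallyUnramified R B := inferInstance
  have : Algebra.FormallyUnramified R B' := inferInstance
  set pB : B →ₐ[R] (R ⧸ I) ⊗[R] B := Algebra.TensorProduct.includeRight
  set pB' : B' →ₐ[R] (R ⧸ I) ⊗[R] B' := Algebra.TensorProduct.includeRight
  have hsB := includeRight_surjective_aux I B
  have hsB' := includeRight_surjective_aux I B'
  have hkB := includeRight_ker_sq_aux I B hI
  have hkB' := includeRight_ker_sq_aux I B' hI
  set eR : (R ⧸ I) ⊗[R] B ≃ₐ[R] (R ⧸ I) ⊗[R] B' := e.restrictScalars R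
  -- lift B → B'
  set f : B →ₐ[R] B' :=
    Algebra.FormallySmooth.liftOfSurjective (eR.toAlgHom.comp pB) pB' hsB' hkB'
  have hf : pB'.comp f = eR.toAlgHom.comp pB :=
    Algebra.FormallySmooth.comp_liftOfSurjective _ _ _ _
  set g : B' →ₐ[R] B :=
    Algebra.FormallySmooth.liftOfSurjective (eR.symm.toAlgHom.comp pB') pB hsB hkB
  have hg : pB.comp g = eR.symm.toAlgHom.comp pB' :=
    Algebra.FormallySmooth.comp_liftOfSurjective _ _ _ _
  have hgf : g.comp f = AlgHom.id R B := by
    apply Algebra.FormallyUnramified.lift_unique' (pB : B →ₐ[R] (R ⧸ I) ⊗[R] B) hkB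
    rw [← AlgHom.comp_assoc, hg, AlgHom.comp_assoc, hf, ← AlgHom.comp_assoc, AlgHom.comp_id]
    ext x
    simp
  have hfg : f.comp g = AlgHom.id R B' := by
    apply Algebra.FormallyUnramified.lift_unique' (pB' : B' →ₐ[R] (R ⧸ I) ⊗[R] B') hkB'
    rw [← AlgHom.comp_assoc, hf, AlgHom.comp_assoc, hg, ← AlgHom.comp_assoc, AlgHom.comp_id]
    ext x
    simp
  exact ⟨AlgEquiv.ofAlgHom f g hfg hgf⟩
end
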